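/- Let m ≥ 0, β ≥ 0, γ ≥ 0, δ̃ ≥ 0, and z, u ∈ Q. Let ψ : E → ℝ be convex and m-strongly convex relative to d on Q, and let y ∈ Q be a δ̃-approximate minimizer of the function x ↦ ψ(x) + β·V[z](x) + γ·V[u](x) on Q. Then for all x ∈ Q: ψ(x) + β·V[z](x) + γ·V[u](x) ≥ ψ(y) + β·V[z](y) + γ·V[u](y) + (β + γ + m)·V[y](x) − δ̃. -/

import Mathlib

open RealInnerProductSpace Finset

/-- The Bregman divergence `V[y](x) = d(x) - d(y) - ⟪∇d(y), x - y⟫` generated by `d`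
with gradient map `Dd`. -/
noncomputable def breg {E : Type*} [NormedAddCommGroup E] [InnerProductSpace ℝ E]
    (d : E → ℝ) (Dd : E → E) (y x : E) : ℝ :=
  d x - d y - ⟪Dd y, x - y⟫

/-- `g` is a subgradient of `ψ` at `z` (relative to the set `Q`). -/
def IsSubgradOn {E : Type*} [NormedAddCommGroup E] [InnerProductSpace ℝ E]
    (Q : Set E) (ψ : E → ℝ) (z g : E) : Prop :=
  ∀ x ∈ Q, ψ z + ⟪g, x - z⟫ ≤ ψ x

/-- `ψ` is `m`-strongly convex relative to `d` on `Q`, where `V` is the Bregman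
divergence generated by `d`. -/
def StrongRelConvexOn {E : Type*} [NormedAddCommGroup E] [InnerProductSpace ℝ E]
    (Q : Set E) (V : E → E → ℝ) (m : ℝ) (ψ : E → ℝ) : Prop :=
  ∀ z ∈ Q, ∀ g : E, IsSubgradOn Q ψ z g → ∀ x ∈ Q, ψ z + ⟪g, x - z⟫ + m * V z x ≤ ψ x

/-- `y` is a `δ`-approximate minimizer of `Ψ` on `Q`: there exists a subgradient `h`
of `Ψ` at `y` such that `⟪h, x - y⟫ ≥ -δ` for all `x ∈ Q`. -/
def IsApproxMinOn {E : Type*} [NormedAddCommGroup E] [InnerProductSpace ℝ E]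
    (Q : Set E) (Ψ : E → ℝ) (δ : ℝ) (y : E) : Prop :=
  y ∈ Q ∧ ∃ h : E, IsSubgradOn Q Ψ y h ∧ ∀ x ∈ Q, -δ ≤ ⟪h, x - y⟫

open Filter Topology

lemma dirDeriv_tendsto {E : Type*} [NormedAddCommGroup E] [InnerProductSpace ℝ E]
    [CompleteSpace E] (d : E → ℝ) (G y v : E) (hd : HasGradientAt d G y) :
    Tendsto (fun t : ℝ => (d (y + t • v) - d y) / t) (𝓝[>] (0:ℝ)) (𝓝 ⟪G, v⟫) := by
  have hφ : HasDerivAt (fun t : ℝ => y + t • v) v 0 := by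
    simpa using ((hasDerivAt_id (0:ℝ)).smul_const v).const_add y
  have hc : HasDerivAt (fun t : ℝ => d (y + t • v)) ⟪G, v⟫ 0 := by
    have hd' : HasFDerivAt d ((InnerProductSpace.toDual ℝ E) G) (y + (0:ℝ) • v) := by
      simpa using hd.hasFDerivAt
    have := hd'.comp_hasDerivAt 0 hφ
    simpa [InnerProductSpace.toDual_apply_apply, Function.comp_def] using this
  have h2 : Tendsto (slope (fun t : ℝ => d (y + t • v)) 0) (𝓝[>] (0:ℝ)) (𝓝 ⟪G, v⟫) :=
    (hasDerivAt_iff_tendsto_slope.mp hc).mono_left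
      (nhdsWithin_mono _ (fun t ht => ne_of_gt ht))
  refine h2.congr' ?_
  filter_upwards [self_mem_nhdsWithin] with t ht
  simp [slope_def_field, div_eq_inv_mul]

/-- Lemma 3.6: if `ψ` is convex and `m`-strongly convex relative to `d` on `Q`
and `y` is a `δ̃`-approximate minimizer of `x ↦ ψ(x) + β·V[z](x) + γ·V[u](x)` on `Q`, then
`ψ(x) + β·V[z](x) + γ·V[u](x) ≥ ψ(y) + β·V[z](y) + γ·V[u](y) + (β + γ + m)·V[y](x) − δ̃`
for all `x ∈ Q`. -/
theorem stmt1
    {E : Type*} [NormedAddCommGroup E] [InnerProductSpace ℝ E] [FiniteDimensional ℝ E]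
    (Q : Set E) (hQ : Convex ℝ Q)
    (d : E → ℝ) (Dd : E → E)
    (hd_conv : ConvexOn ℝ Set.univ d) (hd_diff : ∀ x, HasGradientAt d (Dd x) x)
    (m β γ δt : ℝ) (hm : 0 ≤ m) (hβ : 0 ≤ β) (hγ : 0 ≤ γ) (hδt : 0 ≤ δt)
    (z u : E) (hz : z ∈ Q) (hu : u ∈ Q)
    (ψ : E → ℝ) (hψ_conv : ConvexOn ℝ Q ψ)
    (hψ_strong : StrongRelConvexOn Q (breg d Dd) m ψ)
    (y : E)
    (hy : IsApproxMinOn Q (fun x => ψ x + β * breg d Dd z x + γ * breg d Dd u x) δt y) :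
    ∀ x ∈ Q,
      ψ y + β * breg d Dd z y + γ * breg d Dd u y + (β + γ + m) * breg d Dd y x - δt ≤
        ψ x + β * breg d Dd z x + γ * breg d Dd u x := by
  obtain ⟨hyQ, h, hh, hhδ⟩ := hy
  set g : E := h - β • (Dd y - Dd z) - γ • (Dd y - Dd u) with hg_def
  have hg : IsSubgradOn Q ψ y g := by
    intro x hx
    have key : ⟪h, x - y⟫ + β * ⟪Dd z, x - y⟫ + γ * ⟪Dd u, x - y⟫ - (ψ x - ψ y)
        ≤ (β + γ) * ⟪Dd y, x - y⟫ := by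
      have hlim : Tendsto (fun t : ℝ => (β + γ) * ((d (y + t • (x - y)) - d y) / t))
          (𝓝[>] (0:ℝ)) (𝓝 ((β + γ) * ⟪Dd y, x - y⟫)) :=
        (dirDeriv_tendsto d (Dd y) y (x - y) (hd_diff y)).const_mul _
      refine ge_of_tendsto hlim ?_
      filter_upwards [Ioo_mem_nhdsGT_of_mem (by norm_num : (0:ℝ) ∈ Set.Ico 0 1)]
        with t ht
      obtain ⟨ht0, ht1⟩ := ht
      have hcombo : (1 - t) • y + t • x = y + t • (x - y) := by
        module
      have hyt : y + t • (x - y) ∈ Q := by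
        rw [← hcombo]
        exact hQ hyQ hx (by linarith) ht0.le (by ring)
      have h1 := hh _ hyt
      have h2 : ψ (y + t • (x - y)) ≤ (1 - t) * ψ y + t * ψ x := by
        rw [← hcombo]
        exact hψ_conv.2 hyQ hx (by linarith) ht0.le (by ring)
      simp only [breg] at h1
      have e1 : ⟪Dd z, (y + t • (x - y)) - z⟫ = ⟪Dd z, y - z⟫ + t * ⟪Dd z, x - y⟫ := by
        rw [show (y + t • (x - y)) - z = (y - z) + t • (x - y) by abel,
          inner_add_right, real_inner_smul_right]
      have e2 : ⟪Dd u, (y + t • (x - y)) - u⟫ = ⟪Dd u, y - u⟫ + t * ⟪Dd u, x - y⟫ := by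
        rw [show (y + t • (x - y)) - u = (y - u) + t • (x - y) by abel,
          inner_add_right, real_inner_smul_right]
      have e3 : ⟪h, (y + t • (x - y)) - y⟫ = t * ⟪h, x - y⟫ := by
        rw [show (y + t • (x - y)) - y = t • (x - y) by abel, real_inner_smul_right]
      rw [e1, e2, e3] at h1
      rw [← mul_div_assoc, le_div_iff₀ ht0]
      nlinarith [h1, h2]
    have hginner : ⟪g, x - y⟫ = ⟪h, x - y⟫ - β * (⟪Dd y, x - y⟫ - ⟪Dd z, x - y⟫)
        - γ * (⟪Dd y, x - y⟫ - ⟪Dd u, x - y⟫) := by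
      simp [hg_def, inner_sub_left, real_inner_smul_left]
    rw [hginner]
    linarith [key]
  intro x hx
  have hstrong := hψ_strong y hyQ g hg x hx
  have hδ := hhδ x hx
  have t1 : breg d Dd z x = breg d Dd z y + (⟪Dd y, x - y⟫ - ⟪Dd z, x - y⟫)
      + breg d Dd y x := by
    simp only [breg]
    have : ⟪Dd z, x - z⟫ = ⟪Dd z, y - z⟫ + ⟪Dd z, x - y⟫ := by
      rw [← inner_add_right]; congr 1; abel
    rw [this]; ring
  have t2 : breg d Dd u x = breg d Dd u y + (⟪Dd y, x - y⟫ - ⟪Dd u, x - y⟫)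
      + breg d Dd y x := by
    simp only [breg]
    have : ⟪Dd u, x - u⟫ = ⟪Dd u, y - u⟫ + ⟪Dd u, x - y⟫ := by
      rw [← inner_add_right]; congr 1; abel
    rw [this]; ring
  have hginner : ⟪g, x - y⟫ = ⟪h, x - y⟫ - β * (⟪Dd y, x - y⟫ - ⟪Dd z, x - y⟫)
      - γ * (⟪Dd y, x - y⟫ - ⟪Dd u, x - y⟫) := by
    simp [hg_def, inner_sub_left, real_inner_smul_left]
  rw [hginner] at hstrong
  rw [t1, t2]
  nlinarith [hstrong, hδ]
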